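/- Consider per-frequency ODE systems ∂_t β_k = p·(2β_k² - κ²)·cos(D_k), ∂_t D_k = -p·(6β_k - κ²/β_k)·sin(D_k), for k = 1,...,K, each with identical initial magnitude β_k(0) = κ > 0 and distinct D_k(0) ∈ (0, π). If D_k(0) ≤ D_τ(0), then β_k(t) ≥ β_τ(t) for all t ≥ 0. -/

import Mathlib

open Real

open Set Filter Topology

lemma abs_cos_sub_cos_le' (x y : ℝ) : |Real.cos x - Real.cos y| ≤ |x - y| := by
  rw [Real.cos_sub_cos, abs_mul, abs_mul]
  have h1 : |Real.sin ((x + y) / 2)| ≤ 1 := Real.abs_sin_le_one _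
  have h2 : |Real.sin ((x - y) / 2)| ≤ |(x - y) / 2| := Real.abs_sin_le_abs
  have h3 : |(x - y) / 2| = |x - y| / 2 := by rw [abs_div]; norm_num
  have h4 : |(-2 : ℝ)| = 2 := by norm_num
  rw [h4]
  nlinarith [abs_nonneg (Real.sin ((x - y) / 2)), abs_nonneg (x - y)]

lemma abs_sin_sub_sin_le' (x y : ℝ) : |Real.sin x - Real.sin y| ≤ |x - y| := by
  rw [Real.sin_sub_sin, abs_mul, abs_mul]
  have h1 : |Real.cos ((x + y) / 2)| ≤ 1 := Real.abs_cos_le_one _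
  have h2 : |Real.sin ((x - y) / 2)| ≤ |(x - y) / 2| := Real.abs_sin_le_abs
  have h3 : |(x - y) / 2| = |x - y| / 2 := by rw [abs_div]; norm_num
  have h4 : |(2 : ℝ)| = 2 := by norm_num
  rw [h4]
  nlinarith [abs_nonneg (Real.cos ((x + y) / 2)), abs_nonneg (x - y)]

/-- Derivative-sign contradiction: a function nonnegative on `[0, tS)`, zero at `tS > 0`,
cannot have a strictly positive derivative at `tS`. -/
lemma slope_contra {f : ℝ → ℝ} {tS d : ℝ} (ht : 0 < tS) (hf : HasDerivAt f d tS)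
    (hd : 0 < d) (hft : f tS = 0) (hprev : ∀ s, 0 ≤ s → s < tS → 0 ≤ f s) : False := by
  have hslope : Tendsto (slope f tS) (𝓝[≠] tS) (𝓝 d) :=
    hasDerivAt_iff_tendsto_slope.mp hf
  have hmono : 𝓝[Iio tS] tS ≤ 𝓝[≠] tS :=
    nhdsWithin_mono _ (fun x hx => ne_of_lt hx)
  have h2 : Tendsto (slope f tS) (𝓝[Iio tS] tS) (𝓝 d) := hslope.mono_left hmono
  have hev : ∀ᶠ s in 𝓝[Iio tS] tS, 0 < slope f tS s := h2.eventually (eventually_gt_nhds hd)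
  have hev2 : Ioo 0 tS ∈ 𝓝[Iio tS] tS := Ioo_mem_nhdsLT_of_mem ⟨ht, le_rfl⟩
  have : ∀ᶠ s in 𝓝[Iio tS] tS, False := by
    filter_upwards [hev, hev2] with s hs hs2
    have hfs : 0 ≤ f s := hprev s hs2.1.le hs2.2
    have : slope f tS s = (f s - f tS) / (s - tS) := slope_def_field f tS s
    rw [this, hft, sub_zero] at hs
    have hneg : s - tS < 0 := by linarith [hs2.2]
    have := div_nonpos_of_nonneg_of_nonpos hfs hneg.le
    linarith
  have hne : (𝓝[Iio tS] tS).NeBot := nhdsLT_neBot tS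
  exact this.exists.choose_spec

/-- Conservation of `(2β³ - κ²β)·sin D` along solutions. -/
lemma conserved (p κ : ℝ) (b d : ℝ → ℝ)
    (hbpos : ∀ t, 0 ≤ t → 0 < b t)
    (hb : ∀ t, 0 ≤ t → HasDerivAt b (p * (2 * (b t) ^ 2 - κ ^ 2) * Real.cos (d t)) t)
    (hd : ∀ t, 0 ≤ t → HasDerivAt d (-p * (6 * b t - κ ^ 2 / b t) * Real.sin (d t)) t) :
    ∀ t, 0 ≤ t → (2 * (b t) ^ 3 - κ ^ 2 * b t) * Real.sin (d t)
      = (2 * (b 0) ^ 3 - κ ^ 2 * b 0) * Real.sin (d 0) := by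
  intro T hT
  set E : ℝ → ℝ := fun t => (2 * (b t) ^ 3 - κ ^ 2 * b t) * Real.sin (d t) with hE
  have hDeriv : ∀ t, 0 ≤ t → HasDerivAt E 0 t := by
    intro t ht
    have hb' := hb t ht
    have hd' := hd t ht
    have h1 : HasDerivAt (fun s => 2 * (b s) ^ 3 - κ ^ 2 * b s)
        (2 * (3 * (b t) ^ 2 * (p * (2 * (b t) ^ 2 - κ ^ 2) * Real.cos (d t)))
          - κ ^ 2 * (p * (2 * (b t) ^ 2 - κ ^ 2) * Real.cos (d t))) t := by
      have := ((hb'.pow 3).const_mul 2).sub (hb'.const_mul (κ ^ 2))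
      exact this.congr_deriv (by norm_num)
    have h2 : HasDerivAt (fun s => Real.sin (d s))
        (Real.cos (d t) * (-p * (6 * b t - κ ^ 2 / b t) * Real.sin (d t))) t := hd'.sin
    have := h1.mul h2
    refine this.congr_deriv (Eq.symm ?_)
    have hbne : b t ≠ 0 := (hbpos t ht).ne'
    field_simp
    ring
  have key : ∀ x ∈ Icc (0:ℝ) T, E x = E 0 := by
    apply constant_of_has_deriv_right_zero
    · intro x hx
      exact (hDeriv x hx.1).continuousAt.continuousWithinAt
    · intro x hx
      exact (hDeriv x hx.1).hasDerivWithinAt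
  exact key T ⟨hT, le_rfl⟩

/-- Persistence: the phase stays in `(0, π)` and the magnitude stays above `κ/√2`. -/
lemma persist (p κ : ℝ) (hκ : 0 < κ) (b d : ℝ → ℝ)
    (hbpos : ∀ t, 0 ≤ t → 0 < b t) (hb0 : b 0 = κ) (hd0 : d 0 ∈ Ioo 0 π)
    (hb : ∀ t, 0 ≤ t → HasDerivAt b (p * (2 * (b t) ^ 2 - κ ^ 2) * Real.cos (d t)) t)
    (hd : ∀ t, 0 ≤ t → HasDerivAt d (-p * (6 * b t - κ ^ 2 / b t) * Real.sin (d t)) t) :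
    ∀ t, 0 ≤ t → d t ∈ Ioo 0 π ∧ κ ^ 2 < 2 * (b t) ^ 2 := by
  have hcons := conserved p κ b d hbpos hb hd
  have hE0 : (2 * (b 0) ^ 3 - κ ^ 2 * b 0) * Real.sin (d 0) = κ ^ 3 * Real.sin (d 0) := by
    rw [hb0]; ring
  have hsin0 : 0 < Real.sin (d 0) := Real.sin_pos_of_pos_of_lt_pi hd0.1 hd0.2
  have hc : 0 < κ ^ 3 * Real.sin (d 0) := by positivity
  -- sin (d t) ≠ 0 for all t ≥ 0
  have hsinne : ∀ t, 0 ≤ t → Real.sin (d t) ≠ 0 := by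
    intro t ht hcontra
    have := hcons t ht
    rw [hcontra, mul_zero, hE0] at this
    linarith
  -- d continuous on [0, ∞)
  have hdcont : ∀ t, 0 ≤ t → ContinuousAt d t := fun t ht => (hd t ht).continuousAt
  intro t ht
  have hmem : d t ∈ Ioo 0 π := by
    by_contra hmem
    have hcont : ContinuousOn d (uIcc 0 t) := by
      intro x hx
      rw [uIcc_of_le ht] at hx
      exact (hdcont x hx.1).continuousWithinAt
    have : (0 : ℝ) ∈ uIcc (d 0) (d t) ∨ (π : ℝ) ∈ uIcc (d 0) (d t) := by
      rcases not_and_or.mp (fun h => hmem ⟨h.1, h.2⟩) with h | h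
      · push_neg at h
        left
        exact mem_uIcc.mpr (Or.inr ⟨h, hd0.1.le⟩)
      · push_neg at h
        right
        exact mem_uIcc.mpr (Or.inl ⟨hd0.2.le, h⟩)
    rcases this with h | h
    · obtain ⟨s, hs, hds⟩ := intermediate_value_uIcc hcont h
      rw [uIcc_of_le ht] at hs
      exact hsinne s hs.1 (by rw [hds, Real.sin_zero])
    · obtain ⟨s, hs, hds⟩ := intermediate_value_uIcc hcont h
      rw [uIcc_of_le ht] at hs
      exact hsinne s hs.1 (by rw [hds, Real.sin_pi])
  refine ⟨hmem, ?_⟩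
  have hsint : 0 < Real.sin (d t) := Real.sin_pos_of_pos_of_lt_pi hmem.1 hmem.2
  have heq := hcons t ht
  rw [hE0] at heq
  have hFpos : 0 < 2 * (b t) ^ 3 - κ ^ 2 * b t := by
    by_contra hF
    push_neg at hF
    nlinarith
  have hbt := hbpos t ht
  nlinarith

lemma bound_aux (p κ m M a b c e N : ℝ) (hm : 0 < m)
    (hma : m ≤ a) (haM : a ≤ M) (hmb : m ≤ b) (hbM : b ≤ M)
    (hA : |a - b| ≤ N) (hB : |c - e| ≤ N) :
    |p * (2 * b ^ 2 - κ ^ 2) * Real.cos e - p * (2 * a ^ 2 - κ ^ 2) * Real.cos c|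
      ≤ (|p| * (4 * M + 2 * M ^ 2 + κ ^ 2) + |p| * (6 * M + κ ^ 2 / m + 6 + κ ^ 2 / m ^ 2)) * N ∧
    |(-p * (6 * b - κ ^ 2 / b) * Real.sin e) - (-p * (6 * a - κ ^ 2 / a) * Real.sin c)|
      ≤ (|p| * (4 * M + 2 * M ^ 2 + κ ^ 2) + |p| * (6 * M + κ ^ 2 / m + 6 + κ ^ 2 / m ^ 2)) * N := by
  have hN0 : 0 ≤ N := (abs_nonneg _).trans hA
  have ha0 : 0 < a := hm.trans_le hma
  have hb0 : 0 < b := hm.trans_le hmb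
  have hM0 : 0 < M := ha0.trans_le haM
  have hrest1 : 0 ≤ |p| * (6 * M + κ ^ 2 / m + 6 + κ ^ 2 / m ^ 2) * N := by positivity
  have hrest2 : 0 ≤ |p| * (4 * M + 2 * M ^ 2 + κ ^ 2) * N := by positivity
  constructor
  · have key : p * (2 * b ^ 2 - κ ^ 2) * Real.cos e - p * (2 * a ^ 2 - κ ^ 2) * Real.cos c
        = p * ((2 * (b + a) * (b - a)) * Real.cos e
            + (2 * a ^ 2 - κ ^ 2) * (Real.cos e - Real.cos c)) := by ring
    rw [key, abs_mul]
    have h1 : |(2 * (b + a) * (b - a)) * Real.cos e| ≤ (4 * M) * N := by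
      rw [abs_mul, abs_mul]
      have e1 : |2 * (b + a)| ≤ 4 * M := by
        rw [abs_of_nonneg (by linarith : (0:ℝ) ≤ 2 * (b + a))]; linarith
      have e2 : |b - a| ≤ N := by rw [abs_sub_comm]; exact hA
      have e3 : |Real.cos e| ≤ 1 := Real.abs_cos_le_one e
      calc |2 * (b + a)| * |b - a| * |Real.cos e| ≤ (4 * M) * N * 1 := by
            apply mul_le_mul (mul_le_mul e1 e2 (abs_nonneg _) (by positivity)) e3
              (abs_nonneg _) (by positivity)
        _ = (4 * M) * N := by ring
    have h2 : |(2 * a ^ 2 - κ ^ 2) * (Real.cos e - Real.cos c)| ≤ (2 * M ^ 2 + κ ^ 2) * N := by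
      rw [abs_mul]
      have e1 : |2 * a ^ 2 - κ ^ 2| ≤ 2 * M ^ 2 + κ ^ 2 := by
        rw [abs_le]; constructor <;> nlinarith [sq_nonneg κ, sq_nonneg a]
      have e2 : |Real.cos e - Real.cos c| ≤ N := by
        refine le_trans ?_ hB
        rw [abs_sub_comm c e]
        exact abs_cos_sub_cos_le' e c
      exact mul_le_mul e1 e2 (abs_nonneg _) (by positivity)
    calc |p| * |(2 * (b + a) * (b - a)) * Real.cos e
            + (2 * a ^ 2 - κ ^ 2) * (Real.cos e - Real.cos c)|
        ≤ |p| * ((4 * M) * N + (2 * M ^ 2 + κ ^ 2) * N) := by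
          apply mul_le_mul_of_nonneg_left _ (abs_nonneg p)
          exact le_trans (abs_add_le _ _) (add_le_add h1 h2)
      _ = |p| * (4 * M + 2 * M ^ 2 + κ ^ 2) * N := by ring
      _ ≤ |p| * (4 * M + 2 * M ^ 2 + κ ^ 2) * N
            + |p| * (6 * M + κ ^ 2 / m + 6 + κ ^ 2 / m ^ 2) * N := le_add_of_nonneg_right hrest1
      _ = (|p| * (4 * M + 2 * M ^ 2 + κ ^ 2)
            + |p| * (6 * M + κ ^ 2 / m + 6 + κ ^ 2 / m ^ 2)) * N := by ring
  · have key : (-p * (6 * b - κ ^ 2 / b) * Real.sin e) - (-p * (6 * a - κ ^ 2 / a) * Real.sin c)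
        = p * ((6 * a - κ ^ 2 / a) * (Real.sin c - Real.sin e)
            + ((a - b) * (6 + κ ^ 2 / (a * b))) * Real.sin e) := by
      field_simp
      ring
    rw [key, abs_mul]
    have h1 : |(6 * a - κ ^ 2 / a) * (Real.sin c - Real.sin e)| ≤ (6 * M + κ ^ 2 / m) * N := by
      rw [abs_mul]
      have e1 : |6 * a - κ ^ 2 / a| ≤ 6 * M + κ ^ 2 / m := by
        have hka : κ ^ 2 / a ≤ κ ^ 2 / m := div_le_div_of_nonneg_left (sq_nonneg κ) hm hma
        have hka0 : 0 ≤ κ ^ 2 / a := by positivity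
        rw [abs_le]; constructor <;> nlinarith
      have e2 : |Real.sin c - Real.sin e| ≤ N := le_trans (abs_sin_sub_sin_le' c e) hB
      exact mul_le_mul e1 e2 (abs_nonneg _) (by positivity)
    have h2 : |((a - b) * (6 + κ ^ 2 / (a * b))) * Real.sin e| ≤ (6 + κ ^ 2 / m ^ 2) * N := by
      rw [abs_mul, abs_mul]
      have e1 : |a - b| ≤ N := hA
      have e2 : |6 + κ ^ 2 / (a * b)| ≤ 6 + κ ^ 2 / m ^ 2 := by
        have hab : m ^ 2 ≤ a * b := by nlinarith
        have hk : κ ^ 2 / (a * b) ≤ κ ^ 2 / m ^ 2 :=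
          div_le_div_of_nonneg_left (sq_nonneg κ) (by positivity) hab
        have hk0 : 0 ≤ κ ^ 2 / (a * b) := by positivity
        rw [abs_of_nonneg (by linarith)]; linarith
      have e3 : |Real.sin e| ≤ 1 := Real.abs_sin_le_one e
      calc |a - b| * |6 + κ ^ 2 / (a * b)| * |Real.sin e|
          ≤ N * (6 + κ ^ 2 / m ^ 2) * 1 := by
            apply mul_le_mul (mul_le_mul e1 e2 (abs_nonneg _) hN0) e3 (abs_nonneg _)
              (by positivity)
        _ = (6 + κ ^ 2 / m ^ 2) * N := by ring
    calc |p| * |(6 * a - κ ^ 2 / a) * (Real.sin c - Real.sin e)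
            + ((a - b) * (6 + κ ^ 2 / (a * b))) * Real.sin e|
        ≤ |p| * ((6 * M + κ ^ 2 / m) * N + (6 + κ ^ 2 / m ^ 2) * N) := by
          apply mul_le_mul_of_nonneg_left _ (abs_nonneg p)
          exact le_trans (abs_add_le _ _) (add_le_add h1 h2)
      _ = |p| * (6 * M + κ ^ 2 / m + 6 + κ ^ 2 / m ^ 2) * N := by ring
      _ ≤ |p| * (4 * M + 2 * M ^ 2 + κ ^ 2) * N
            + |p| * (6 * M + κ ^ 2 / m + 6 + κ ^ 2 / m ^ 2) * N := le_add_of_nonneg_left hrest2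
      _ = (|p| * (4 * M + 2 * M ^ 2 + κ ^ 2)
            + |p| * (6 * M + κ ^ 2 / m + 6 + κ ^ 2 / m ^ 2)) * N := by ring

/-- Backward uniqueness: two solutions meeting at time `T ≥ 0` had the same phase at time 0. -/
lemma backward_uniq (p κ : ℝ) (b1 d1 b2 d2 : ℝ → ℝ)
    (hb1pos : ∀ t, 0 ≤ t → 0 < b1 t) (hb2pos : ∀ t, 0 ≤ t → 0 < b2 t)
    (hb1 : ∀ t, 0 ≤ t → HasDerivAt b1 (p * (2 * (b1 t) ^ 2 - κ ^ 2) * Real.cos (d1 t)) t)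
    (hd1 : ∀ t, 0 ≤ t → HasDerivAt d1 (-p * (6 * b1 t - κ ^ 2 / b1 t) * Real.sin (d1 t)) t)
    (hb2 : ∀ t, 0 ≤ t → HasDerivAt b2 (p * (2 * (b2 t) ^ 2 - κ ^ 2) * Real.cos (d2 t)) t)
    (hd2 : ∀ t, 0 ≤ t → HasDerivAt d2 (-p * (6 * b2 t - κ ^ 2 / b2 t) * Real.sin (d2 t)) t)
    (T : ℝ) (hT : 0 ≤ T) (hbT : b1 T = b2 T) (hdT : d1 T = d2 T) :
    d1 0 = d2 0 := by
  -- bounds for the four functions on [0, T]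
  have hcont1 : ContinuousOn b1 (Icc 0 T) := fun x hx => (hb1 x hx.1).continuousAt.continuousWithinAt
  have hcont2 : ContinuousOn b2 (Icc 0 T) := fun x hx => (hb2 x hx.1).continuousAt.continuousWithinAt
  have hne : (Icc (0:ℝ) T).Nonempty := nonempty_Icc.mpr hT
  obtain ⟨x1, hx1, hmin1⟩ := isCompact_Icc.exists_isMinOn hne hcont1
  obtain ⟨x2, hx2, hmin2⟩ := isCompact_Icc.exists_isMinOn hne hcont2
  obtain ⟨y1, hy1, hmax1⟩ := isCompact_Icc.exists_isMaxOn hne hcont1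
  obtain ⟨y2, hy2, hmax2⟩ := isCompact_Icc.exists_isMaxOn hne hcont2
  set m : ℝ := min (b1 x1) (b2 x2) with hm
  set M : ℝ := max (b1 y1) (b2 y2) with hM
  have hmpos : 0 < m := lt_min (hb1pos x1 hx1.1) (hb2pos x2 hx2.1)
  have hbound : ∀ u ∈ Icc (0:ℝ) T, m ≤ b1 u ∧ b1 u ≤ M ∧ m ≤ b2 u ∧ b2 u ≤ M := by
    intro u hu
    exact ⟨le_trans (min_le_left _ _) (hmin1 hu),
      le_trans (hmax1 hu) (le_max_left _ _),
      le_trans (min_le_right _ _) (hmin2 hu),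
      le_trans (hmax2 hu) (le_max_right _ _)⟩
  have hMpos : 0 < M := lt_of_lt_of_le hmpos ((hbound 0 ⟨le_rfl, hT⟩).1.trans (hbound 0 ⟨le_rfl, hT⟩).2.1)
  -- Lipschitz-type constant
  set L : ℝ := |p| * (4 * M + 2 * M ^ 2 + κ ^ 2) + |p| * (6 * M + κ ^ 2 / m + 6 + κ ^ 2 / m ^ 2)
    with hL
  -- time-reversed difference
  set w : ℝ → ℝ × ℝ := fun s => (b1 (T - s) - b2 (T - s), d1 (T - s) - d2 (T - s)) with hw
  set w' : ℝ → ℝ × ℝ := fun s =>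
    (p * (2 * (b2 (T - s)) ^ 2 - κ ^ 2) * Real.cos (d2 (T - s))
      - p * (2 * (b1 (T - s)) ^ 2 - κ ^ 2) * Real.cos (d1 (T - s)),
     -p * (6 * b2 (T - s) - κ ^ 2 / b2 (T - s)) * Real.sin (d2 (T - s))
      - -p * (6 * b1 (T - s) - κ ^ 2 / b1 (T - s)) * Real.sin (d1 (T - s))) with hw'
  have hwderiv : ∀ s ∈ Icc (0:ℝ) T, HasDerivAt w (w' s) s := by
    intro s hs
    have hu : (0:ℝ) ≤ T - s := by linarith [hs.2]
    have hneg : HasDerivAt (fun x : ℝ => T - x) (-1) s := (hasDerivAt_id s).const_sub T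
    have c1 : HasDerivAt (fun x => b1 (T - x))
        ((p * (2 * (b1 (T - s)) ^ 2 - κ ^ 2) * Real.cos (d1 (T - s))) * (-1)) s :=
      (hb1 _ hu).comp s hneg
    have c2 : HasDerivAt (fun x => b2 (T - x))
        ((p * (2 * (b2 (T - s)) ^ 2 - κ ^ 2) * Real.cos (d2 (T - s))) * (-1)) s :=
      (hb2 _ hu).comp s hneg
    have c3 : HasDerivAt (fun x => d1 (T - x))
        ((-p * (6 * b1 (T - s) - κ ^ 2 / b1 (T - s)) * Real.sin (d1 (T - s))) * (-1)) s :=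
      (hd1 _ hu).comp s hneg
    have c4 : HasDerivAt (fun x => d2 (T - x))
        ((-p * (6 * b2 (T - s) - κ ^ 2 / b2 (T - s)) * Real.sin (d2 (T - s))) * (-1)) s :=
      (hd2 _ hu).comp s hneg
    have hder := (c1.sub c2).prodMk (c3.sub c4)
    have hval : w' s =
        (p * (2 * (b1 (T - s)) ^ 2 - κ ^ 2) * Real.cos (d1 (T - s)) * (-1)
          - p * (2 * (b2 (T - s)) ^ 2 - κ ^ 2) * Real.cos (d2 (T - s)) * (-1),
         -p * (6 * b1 (T - s) - κ ^ 2 / b1 (T - s)) * Real.sin (d1 (T - s)) * (-1)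
          - -p * (6 * b2 (T - s) - κ ^ 2 / b2 (T - s)) * Real.sin (d2 (T - s)) * (-1)) := by
      simp only [hw', Prod.mk.injEq]
      exact ⟨by ring, by ring⟩
    rw [hval]
    exact hder
  have hwcont : ContinuousOn w (Icc 0 T) :=
    fun x hx => (hwderiv x hx).continuousAt.continuousWithinAt
  -- Gronwall bound
  have hbnd : ∀ s ∈ Ico (0:ℝ) T, ‖w' s‖ ≤ L * ‖w s‖ + 0 := by
    intro s hs
    have hu : T - s ∈ Icc (0:ℝ) T := ⟨by linarith [hs.2], by linarith [hs.1]⟩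
    obtain ⟨hma, haM, hmb, hbM⟩ := hbound _ hu
    have hA : |b1 (T - s) - b2 (T - s)| ≤ ‖w s‖ := by
      calc |b1 (T - s) - b2 (T - s)| = ‖(w s).1‖ := (Real.norm_eq_abs _).symm
        _ ≤ ‖w s‖ := norm_fst_le (w s)
    have hB : |d1 (T - s) - d2 (T - s)| ≤ ‖w s‖ := by
      calc |d1 (T - s) - d2 (T - s)| = ‖(w s).2‖ := (Real.norm_eq_abs _).symm
        _ ≤ ‖w s‖ := norm_snd_le (w s)
    have hk := bound_aux p κ m M (b1 (T - s)) (b2 (T - s)) (d1 (T - s)) (d2 (T - s)) (‖w s‖)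
      hmpos hma haM hmb hbM hA hB
    rw [add_zero]
    calc ‖w' s‖ = max ‖(w' s).1‖ ‖(w' s).2‖ := Prod.norm_def _
      _ ≤ L * ‖w s‖ := by
          apply max_le
          · rw [Real.norm_eq_abs]
            rw [hL]
            exact hk.1
          · rw [Real.norm_eq_abs]
            rw [hL]
            exact hk.2
  have h0 : ‖w 0‖ ≤ 0 := by
    have hw0 : w 0 = (0, 0) := by simp [hw, hbT, hdT]
    rw [hw0]
    simp [Prod.norm_def]
  have main := norm_le_gronwallBound_of_norm_deriv_right_le hwcont
      (fun s hs => (hwderiv s (Ico_subset_Icc_self hs)).hasDerivWithinAt) h0 hbnd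
  have hTfin := main T ⟨hT, le_rfl⟩
  rw [sub_zero, gronwallBound_ε0_δ0] at hTfin
  have hwT : w T = 0 := norm_le_zero_iff.mp hTfin
  have := congrArg Prod.snd hwT
  simp only [hw, sub_self, Prod.snd_zero] at this
  linarith [this]

/-- Order preservation across frequencies: for the per-frequency systems
`β_k' = p(2β_k² - κ²)cos D_k`, `D_k' = -p(6β_k - κ²/β_k)sin D_k` with identical initial
magnitudes `β_k(0) = κ > 0` and distinct initial phases `D_k(0) ∈ (0, π)`, a smaller
initial phase difference yields a larger magnitude for all time. -/
theorem rank_preservation (p κ : ℝ) (hp : 0 < p) (hκ : 0 < κ) (K : ℕ)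
    (β D : Fin K → ℝ → ℝ)
    (hβpos : ∀ k t, 0 ≤ t → 0 < β k t)
    (hβ0 : ∀ k, β k 0 = κ)
    (hD0 : ∀ k, D k 0 ∈ Set.Ioo 0 π)
    (hdistinct : ∀ k τ, k ≠ τ → D k 0 ≠ D τ 0)
    (hβ : ∀ k t, 0 ≤ t →
      HasDerivAt (β k) (p * (2 * (β k t) ^ 2 - κ ^ 2) * Real.cos (D k t)) t)
    (hD : ∀ k t, 0 ≤ t →
      HasDerivAt (D k) (-p * (6 * β k t - κ ^ 2 / β k t) * Real.sin (D k t)) t)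
    (k τ : Fin K) (hle : D k 0 ≤ D τ 0) :
    ∀ t, 0 ≤ t → β k t ≥ β τ t := by
  intro t ht
  rcases eq_or_ne k τ with rfl | hkτ
  · exact le_rfl
  have hlt : D k 0 < D τ 0 := hle.lt_of_ne (hdistinct k τ hkτ)
  set g : ℝ → ℝ := fun s => D τ s - D k s with hgdef
  set h : ℝ → ℝ := fun s => β k s - β τ s with hhdef
  have hg' : ∀ s, 0 ≤ s → HasDerivAt g
      (-p * (6 * β τ s - κ ^ 2 / β τ s) * Real.sin (D τ s)
        - -p * (6 * β k s - κ ^ 2 / β k s) * Real.sin (D k s)) s :=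
    fun s hs => (hD τ s hs).sub (hD k s hs)
  have hh' : ∀ s, 0 ≤ s → HasDerivAt h
      (p * (2 * (β k s) ^ 2 - κ ^ 2) * Real.cos (D k s)
        - p * (2 * (β τ s) ^ 2 - κ ^ 2) * Real.cos (D τ s)) s :=
    fun s hs => (hβ k s hs).sub (hβ τ s hs)
  have hpers : ∀ (i : Fin K), ∀ s, 0 ≤ s → D i s ∈ Ioo 0 π ∧ κ ^ 2 < 2 * (β i s) ^ 2 :=
    fun i => persist p κ hκ (β i) (D i) (hβpos i) (hβ0 i) (hD0 i) (hβ i) (hD i)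
  set A : Set ℝ := {s | 0 ≤ s ∧ (g s ≤ 0 ∨ h s < 0)} with hAdef
  suffices hA : t ∉ A by
    by_contra hcon
    push_neg at hcon
    exact hA ⟨ht, Or.inr (sub_neg.mpr hcon)⟩
  by_contra htA
  have hAne : A.Nonempty := ⟨t, htA⟩
  have hAbdd : BddBelow A := ⟨0, fun x hx => hx.1⟩
  set tS := sInf A with htSdef
  have htS0 : 0 ≤ tS := le_csInf hAne (fun x hx => hx.1)
  have hbefore : ∀ s, 0 ≤ s → s < tS → 0 < g s ∧ 0 ≤ h s := by
    intro s hs hstS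
    have hsA : s ∉ A := notMem_of_lt_csInf hstS hAbdd
    have hX : ¬(g s ≤ 0 ∨ h s < 0) := fun hx => hsA ⟨hs, hx⟩
    push_neg at hX
    exact ⟨hX.1, hX.2⟩
  have h0 : h 0 = 0 := by simp [hhdef, hβ0]
  have hg0 : 0 < g 0 := sub_pos.mpr hlt
  -- derivative of h at 0 is positive
  have hh0' := hh' 0 le_rfl
  rw [hβ0 k, hβ0 τ] at hh0'
  have hcos0 : Real.cos (D τ 0) < Real.cos (D k 0) :=
    Real.cos_lt_cos_of_nonneg_of_le_pi (hD0 k).1.le (hD0 τ).2.le hlt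
  have hv0pos : 0 < p * (2 * κ ^ 2 - κ ^ 2) * Real.cos (D k 0)
      - p * (2 * κ ^ 2 - κ ^ 2) * Real.cos (D τ 0) := by
    have hid : p * (2 * κ ^ 2 - κ ^ 2) * Real.cos (D k 0)
        - p * (2 * κ ^ 2 - κ ^ 2) * Real.cos (D τ 0)
        = p * κ ^ 2 * (Real.cos (D k 0) - Real.cos (D τ 0)) := by ring
    rw [hid]
    exact mul_pos (mul_pos hp (by positivity)) (sub_pos.mpr hcos0)
  have hev2 : ∀ᶠ s in 𝓝[>] (0:ℝ), 0 < h s := by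
    have hslope : Tendsto (slope h 0) (𝓝[≠] (0:ℝ)) (𝓝 _) := hasDerivAt_iff_tendsto_slope.mp hh0'
    have h2 : Tendsto (slope h 0) (𝓝[>] (0:ℝ)) (𝓝 _) :=
      hslope.mono_left (nhdsWithin_mono _ (fun x hx => ne_of_gt hx))
    have hev := h2.eventually (eventually_gt_nhds hv0pos)
    filter_upwards [hev, self_mem_nhdsWithin] with s hs hs0
    have hsl : slope h 0 s = (h s - h 0) / (s - 0) := slope_def_field h 0 s
    rw [hsl, h0, sub_zero, sub_zero] at hs
    rcases div_pos_iff.mp hs with ⟨h1, _⟩ | ⟨_, h2'⟩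
    · exact h1
    · exact absurd hs0 (not_lt.mpr h2'.le)
  have hev1 : ∀ᶠ s in 𝓝 (0:ℝ), 0 < g s := (hg' 0 le_rfl).continuousAt (Ioi_mem_nhds hg0)
  have hpos : 0 < tS := by
    have hev3 : ∀ᶠ s in 𝓝[>] (0:ℝ), s ∉ A := by
      filter_upwards [hev2, hev1.filter_mono nhdsWithin_le_nhds] with s h2 h1
      intro hsA
      rcases hsA.2 with hcase | hcase
      · exact absurd hcase (not_le.mpr h1)
      · exact absurd hcase (not_lt.mpr h2.le)
    rw [eventually_nhdsWithin_iff] at hev3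
    obtain ⟨ε, hε, hball⟩ := Metric.eventually_nhds_iff.mp hev3
    have hlow : ∀ x ∈ A, ε ≤ x := by
      intro x hx
      by_contra hxe
      push_neg at hxe
      have hx0 : 0 ≤ x := hx.1
      rcases eq_or_lt_of_le hx0 with heq | hlt0
      · rcases hx.2 with hcase | hcase
        · rw [← heq] at hcase; exact absurd hcase (not_le.mpr hg0)
        · rw [← heq] at hcase; rw [h0] at hcase; exact lt_irrefl 0 hcase
      · exact hball (by rw [Real.dist_eq, sub_zero, abs_of_nonneg hx0]; exact hxe) hlt0 hx
    have := le_csInf hAne hlow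
    linarith
  have hgc : ContinuousAt g tS := (hg' tS htS0).continuousAt
  have hhc : ContinuousAt h tS := (hh' tS htS0).continuousAt
  have hmemIoo : Ioo 0 tS ∈ 𝓝[<] tS := Ioo_mem_nhdsLT_of_mem ⟨hpos, le_rfl⟩
  haveI hne : (𝓝[Iio tS] tS).NeBot := nhdsLT_neBot tS
  have hgleft : 0 ≤ g tS := by
    refine ge_of_tendsto (hgc.continuousWithinAt : ContinuousWithinAt g (Iio tS) tS) ?_
    filter_upwards [hmemIoo] with s hs
    exact (hbefore s hs.1.le hs.2).1.le
  have hhleft : 0 ≤ h tS := by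
    refine ge_of_tendsto (hhc.continuousWithinAt : ContinuousWithinAt h (Iio tS) tS) ?_
    filter_upwards [hmemIoo] with s hs
    exact (hbefore s hs.1.le hs.2).2
  have hnotboth : ¬(0 < g tS ∧ 0 < h tS) := by
    rintro ⟨hg1, hh1⟩
    have e1 : ∀ᶠ s in 𝓝 tS, 0 < g s := hgc (Ioi_mem_nhds hg1)
    have e2 : ∀ᶠ s in 𝓝 tS, 0 < h s := hhc (Ioi_mem_nhds hh1)
    obtain ⟨ε, hε, hball⟩ := Metric.eventually_nhds_iff.mp (e1.and e2)
    have hlow : ∀ x ∈ A, tS + ε ≤ x := by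
      intro x hx
      by_contra hxe
      push_neg at hxe
      have hxtS : tS ≤ x := csInf_le hAbdd hx
      have hdist : dist x tS < ε := by
        rw [Real.dist_eq, abs_of_nonneg (by linarith)]
        linarith
      obtain ⟨hg2, hh2⟩ := hball hdist
      rcases hx.2 with hcase | hcase
      · exact absurd hcase (not_le.mpr hg2)
      · exact absurd hcase (not_lt.mpr hh2.le)
    have := le_csInf hAne hlow
    linarith
  rcases eq_or_lt_of_le hgleft with hg1 | hg1
  · rcases eq_or_lt_of_le hhleft with hh1 | hh1
    · -- double equality: backward uniqueness
      have hbeq : β k tS = β τ tS := by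
        have : h tS = 0 := hh1.symm
        simpa [hhdef, sub_eq_zero] using this
      have hdeq : D k tS = D τ tS := by
        have : g tS = 0 := hg1.symm
        have := sub_eq_zero.mp this
        exact this.symm
      have := backward_uniq p κ (β k) (D k) (β τ) (D τ) (hβpos k) (hβpos τ)
        (hβ k) (hD k) (hβ τ) (hD τ) tS htS0 hbeq hdeq
      exact hlt.ne this
    · -- g tS = 0, h tS > 0 : slope contradiction for g
      have hgd := hg' tS htS0
      have hdeq : D τ tS = D k tS := sub_eq_zero.mp hg1.symm
      rw [hdeq] at hgd
      have hsin : 0 < Real.sin (D k tS) :=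
        Real.sin_pos_of_pos_of_lt_pi (hpers k tS htS0).1.1 (hpers k tS htS0).1.2
      have hbk : 0 < β k tS := hβpos k tS htS0
      have hbt : 0 < β τ tS := hβpos τ tS htS0
      have hhk : β τ tS < β k tS := by
        have := hh1
        simp only [hhdef] at this
        linarith
      have hfrac : κ ^ 2 / β k tS < κ ^ 2 / β τ tS :=
        div_lt_div_of_pos_left (by positivity) hbt hhk
      have hX : 0 < (6 * β k tS - κ ^ 2 / β k tS) - (6 * β τ tS - κ ^ 2 / β τ tS) := by
        linarith
      have hvpos : 0 < -p * (6 * β τ tS - κ ^ 2 / β τ tS) * Real.sin (D k tS)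
          - -p * (6 * β k tS - κ ^ 2 / β k tS) * Real.sin (D k tS) := by
        have hid : -p * (6 * β τ tS - κ ^ 2 / β τ tS) * Real.sin (D k tS)
            - -p * (6 * β k tS - κ ^ 2 / β k tS) * Real.sin (D k tS)
            = p * ((6 * β k tS - κ ^ 2 / β k tS) - (6 * β τ tS - κ ^ 2 / β τ tS))
              * Real.sin (D k tS) := by ring
        rw [hid]
        exact mul_pos (mul_pos hp hX) hsin
      exact slope_contra hpos hgd hvpos hg1.symm (fun s hs1 hs2 => (hbefore s hs1 hs2).1.le)
  · -- 0 < g tS : then h tS = 0, slope contradiction for h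
    have hh1 : h tS = 0 := by
      rcases eq_or_lt_of_le hhleft with hh1 | hh1
      · exact hh1.symm
      · exact absurd ⟨hg1, hh1⟩ hnotboth
    have hhd := hh' tS htS0
    have hbeq : β τ tS = β k tS := by
      have := sub_eq_zero.mp hh1
      exact this.symm
    rw [hbeq] at hhd
    have hdk := (hpers k tS htS0).1
    have hdτ := (hpers τ tS htS0).1
    have hDlt : D k tS < D τ tS := by
      have := hg1
      simp only [hgdef] at this
      linarith
    have hcos : Real.cos (D τ tS) < Real.cos (D k tS) :=
      Real.cos_lt_cos_of_nonneg_of_le_pi hdk.1.le hdτ.2.le hDlt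
    have h2b : κ ^ 2 < 2 * (β k tS) ^ 2 := (hpers k tS htS0).2
    have hvpos : 0 < p * (2 * (β k tS) ^ 2 - κ ^ 2) * Real.cos (D k tS)
        - p * (2 * (β k tS) ^ 2 - κ ^ 2) * Real.cos (D τ tS) := by
      have hid : p * (2 * (β k tS) ^ 2 - κ ^ 2) * Real.cos (D k tS)
          - p * (2 * (β k tS) ^ 2 - κ ^ 2) * Real.cos (D τ tS)
          = p * (2 * (β k tS) ^ 2 - κ ^ 2) * (Real.cos (D k tS) - Real.cos (D τ tS)) := by ring
      rw [hid]
      exact mul_pos (mul_pos hp (by linarith)) (sub_pos.mpr hcos)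
    exact slope_contra hpos hhd hvpos hh1 (fun s hs1 hs2 => (hbefore s hs1 hs2).2)
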